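/- Let W be the affine Weyl group of a simple Lie algebra g̊ ≠ sl₂, and for p ∈ ℤ let W^p = {w ∈ W : ℓ^{∞/2}(w) = p} where ℓ^{∞/2} is the semi-infinite length function. Then W^p is infinite for every p ∈ ℤ. If g̊ = sl₂, then W^p has exactly one element for every p ∈ ℤ. -/

import Mathlib

open Set

/-- for the affine Weyl group `W = W̊ ⋉ t_{Q̊^∨}` of a simple Lie
algebra `g̊` (elements modelled as pairs `(y, μ) ∈ W̊ × Q̊^∨`) with semi-infinite
length `ℓ^{∞/2}(t_μ y) = ℓ(y) − 2(ρ̊|μ)`, the level sets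
`W^p = {w : ℓ^{∞/2}(w) = p}` are infinite for every `p ∈ ℤ` when `g̊ ≠ sl₂`
(i.e. the rank is > 1), and are singletons for every `p ∈ ℤ` when `g̊ = sl₂`
(rank 1, `W̊ = {1, s}` with `ℓ(s) = 1`). -/
theorem semiInfinite_length_level_sets
    {Wf Q I : Type*} [Group Wf] [AddCommGroup Q] [Fintype I]
    (ℓ : Wf → ℕ)                  -- the length function of the finite Weyl group W̊
    (ρ2 : Q →+ ℤ)                 -- μ ↦ 2(ρ̊|μ)
    (b : Module.Basis I ℤ Q)             -- the simple coroots, a ℤ-basis of Q̊^∨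
    (hρ : ∀ i : I, ρ2 (b i) = 2)  -- 2(ρ̊|αᵢ^∨) = 2
    (hone : ℓ 1 = 0)
    (hodd : ∃ y : Wf, ℓ y = 1) :
    -- if g̊ ≠ sl₂, i.e. the rank is at least 2, every W^p is infinite
    (1 < Fintype.card I →
      ∀ p : ℤ, {w : Wf × Q | (ℓ w.1 : ℤ) - ρ2 w.2 = p}.Infinite) ∧
    -- if g̊ = sl₂, every W^p has exactly one element
    (Fintype.card I = 1 →
      Nat.card Wf = 2 → (∀ y : Wf, ℓ y ≤ 1) → (∀ y : Wf, ℓ y = 0 ↔ y = 1) →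
      ∀ p : ℤ, ∃! w : Wf × Q, (ℓ w.1 : ℤ) - ρ2 w.2 = p) := by
  constructor
  · -- rank ≥ 2 case
    intro hcard p
    obtain ⟨i, j, hij⟩ := Fintype.exists_pair_of_one_lt_card hcard
    -- choose y and m with ℓ y - 2m = p
    obtain ⟨y, m, hym⟩ : ∃ (y : Wf) (m : ℤ), (ℓ y : ℤ) - 2 * m = p := by
      rcases Int.even_or_odd p with ⟨m, hm⟩ | ⟨m, hm⟩
      · exact ⟨1, -m, by simp [hone, hm]; ring⟩
      · obtain ⟨s, hs⟩ := hodd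
        exact ⟨s, -m, by rw [hs, hm]; push_cast; ring⟩
    refine Set.infinite_of_injective_forall_mem
      (f := fun n : ℤ => (y, m • b i + n • (b i - b j))) ?_ ?_
    · intro n n' h
      have h2 := congrArg (fun z => b.repr z.2 i) h
      simp only [map_add, map_zsmul, map_sub, Module.Basis.repr_self, Finsupp.coe_add,
        Finsupp.coe_smul, Pi.add_apply, Pi.smul_apply, Finsupp.coe_sub, Pi.sub_apply,
        Finsupp.single_eq_same, Finsupp.single_eq_of_ne' (Ne.symm hij), smul_eq_mul] at h2
      omega
    · intro n
      simp only [Set.mem_setOf_eq, map_add, map_zsmul, map_sub, hρ i, hρ j, smul_eq_mul]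
      omega
  · -- rank 1 case
    intro h1 hW2 hle h0 p
    obtain ⟨i, hi⟩ := Fintype.card_eq_one_iff.mp h1
    haveI : Unique I := ⟨⟨i⟩, hi⟩
    have hrep : ∀ μ : Q, μ = b.repr μ i • b i := by
      intro μ
      have := b.sum_repr μ
      rw [Fintype.sum_unique, show (default : I) = i from hi default] at this
      exact this.symm
    have hval : ∀ μ : Q, ρ2 μ = 2 * b.repr μ i := by
      intro μ
      conv_lhs => rw [hrep μ]
      rw [map_zsmul, hρ i, smul_eq_mul]; ring
    obtain ⟨s, hs⟩ := hodd
    have hs1 : s ≠ 1 := by intro h; rw [h, hone] at hs; exact zero_ne_one hs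
    obtain ⟨t, _, hts⟩ := (Nat.card_eq_two_iff' (1 : Wf)).mp hW2
    rcases Int.even_or_odd p with ⟨m, hm⟩ | ⟨m, hm⟩
    · refine ⟨(1, (-m) • b i), ?_, ?_⟩
      · simp only [map_zsmul, hρ i, hone, smul_eq_mul]; omega
      · rintro ⟨y', μ'⟩ hy'
        simp only [Set.mem_setOf_eq] at hy'
        rw [hval μ'] at hy'
        have hle' := hle y'
        have hy0 : ℓ y' = 0 := by omega
        have : y' = 1 := (h0 y').mp hy0
        subst this
        have hc : b.repr μ' i = -m := by rw [hone] at hy'; omega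
        have := hrep μ'
        rw [hc] at this
        exact Prod.ext rfl this
    · refine ⟨(s, (-m) • b i), ?_, ?_⟩
      · simp only [map_zsmul, hρ i, hs, smul_eq_mul]; omega
      · rintro ⟨y', μ'⟩ hy'
        simp only [Set.mem_setOf_eq] at hy'
        rw [hval μ'] at hy'
        have hle' := hle y'
        have hy1 : ℓ y' = 1 := by omega
        have hy'1 : y' ≠ 1 := by intro h; rw [h, hone] at hy1; omega
        have hys : y' = s := (hts y' hy'1).trans (hts s hs1).symm
        subst hys
        have hc : b.repr μ' i = -m := by rw [hy1] at hy'; omega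
        have := hrep μ'
        rw [hc] at this
        exact Prod.ext rfl this
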